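/- Let G be a group with subgroups A, B and an isomorphism φ : A ≃* B, and form the HNN extension HNNExtension G A B φ with canonical injection of : G → HNNExtension G A B φ and stable letter t. Assume that every element z ∈ B that centralizes B satisfies of(z) * t = t * of(z). Let c ∈ B with c ≠ 1 be an element that centralizes B, and let τ be a group automorphism of HNNExtension G A B φ such that τ(of(g)) = of(g) for all g ∈ G and τ(t) = of(c) * t. If τ is an inner automorphism of HNNExtension G A B φ, then c has finite order in G and B = G (i.e. B is the whole group, B = ⊤). -/

import Mathlib

open HNNExtension HNNExtension.NormalWord

namespace HNNTwistAux


variable {G : Type*} [Group G] {A B : Subgroup G} (φ : A ≃* B)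

private lemma units_neg_of_ne {u v : ℤˣ} (h : u ≠ v) : u = -v := by
  rcases Int.units_eq_one_or u with rfl | rfl <;>
    rcases Int.units_eq_one_or v with rfl | rfl <;> simp_all

private lemma prod_mk (h : G) (L : List (ℤˣ × G)) (ch) :
    (ReducedWord.mk h L ch).prod φ =
      of h * (L.map (fun x => ((t : HNNExtension G A B φ) ^ (x.1 : ℤ) * of x.2))).prod := rfl

/-- If `x` commutes with every `of g` and `x` has a reduced word with nonempty list,
then the subgroup `toSubgroup A B (-u)` is everything, where `u` is the first exponent. -/
private lemma head_top (x : HNNExtension G A B φ) (hx : ∀ g : G, of g * x = x * of g)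
    (W : ReducedWord G A B) (hW : W.prod φ = x) (hne : W.toList ≠ []) :
    toSubgroup A B (-(W.toList.head hne).1) = ⊤ := by
  rcases List.eq_nil_or_concat W.toList with h | ⟨l, p, hl⟩
  · exact absurd h hne
  rw [List.concat_eq_append] at hl
  have key : ∀ g : G, (g * W.head)⁻¹ * W.head ∈ toSubgroup A B (-(W.toList.head hne).1) := by
    intro g
    -- first word : of g * x
    have ch2 : (l ++ [(p.1, p.2 * g)]).IsChain
        (fun a b => a.2 ∈ toSubgroup A B a.1 → a.1 = b.1) := by
      have := W.chain
      rw [hl, List.isChain_append] at this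
      rw [List.isChain_append]
      refine ⟨this.1, List.isChain_singleton _, ?_⟩
      intro a ha b hb
      simp only [List.head?_cons, Option.mem_def, Option.some.injEq] at hb
      subst hb
      exact this.2.2 a ha p (by simp)
    let W₁ : ReducedWord G A B := ⟨g * W.head, W.toList, W.chain⟩
    let W₂ : ReducedWord G A B := ⟨W.head, l ++ [(p.1, p.2 * g)], ch2⟩
    have h₁ : W₁.prod φ = of g * x := by
      show (ReducedWord.mk _ _ _).prod φ = _
      rw [prod_mk, map_mul, mul_assoc, ← hW]
      rfl
    have h₂ : W₂.prod φ = x * of g := by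
      show (ReducedWord.mk _ _ _).prod φ = _
      rw [prod_mk, ← hW]
      conv_rhs => rw [show W.prod φ = (ReducedWord.mk W.head W.toList W.chain).prod φ from rfl,
        prod_mk]
      rw [hl]
      simp [List.prod_append, mul_assoc]
    have hprod : W₁.prod φ = W₂.prod φ := by
      rw [h₁, h₂, hx]
    have := (ReducedWord.map_fst_eq_and_of_prod_eq φ hprod).2
    have hhead : W₁.toList.head? = some (W.toList.head hne) := List.head?_eq_head _
    have := this (W.toList.head hne).1 (by rw [hhead]; rfl)
    simpa [W₁, W₂] using this
  rw [eq_top_iff]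
  intro y _
  have := key (W.head * y⁻¹ * W.head⁻¹)
  have hy : (W.head * y⁻¹ * W.head⁻¹ * W.head)⁻¹ * W.head = y := by group
  rwa [hy] at this

/-- Inverse of a reduced word is (representable by) a reduced word, with reversed
negated pattern, and known last entry. -/
private lemma exists_inv_word (L : List (ℤˣ × G)) :
    ∀ (ch : L.IsChain (fun a b => a.2 ∈ toSubgroup A B a.1 → a.1 = b.1)) (g₀ : G),
    ∃ W' : ReducedWord G A B,
      W'.prod φ = ((ReducedWord.mk g₀ L ch).prod φ)⁻¹ ∧
      W'.toList.map Prod.fst = (L.map (fun q => -q.1)).reverse ∧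
      (L = [] → W'.toList = []) ∧
      (∀ hne : L ≠ [], W'.toList.getLast? = some (-(L.head hne).1, g₀⁻¹)) := by
  induction L with
  | nil =>
    intro ch g₀
    refine ⟨⟨g₀⁻¹, [], List.isChain_nil⟩, ?_, by simp, fun _ => rfl, by simp⟩
    simp [prod_mk]
  | cons q L₂ ih =>
    intro ch g₀
    obtain ⟨u, g⟩ := q
    have ch₂ : L₂.IsChain (fun a b => a.2 ∈ toSubgroup A B a.1 → a.1 = b.1) := ch.tail
    obtain ⟨W₂, hprod, hpat, hnil, hlast⟩ := ih ch₂ g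
    have chW' : (W₂.toList ++ [(-u, g₀⁻¹)]).IsChain
        (fun a b => a.2 ∈ toSubgroup A B a.1 → a.1 = b.1) := by
      rw [List.isChain_append]
      refine ⟨W₂.chain, List.isChain_singleton _, ?_⟩
      intro a ha b hb
      simp only [List.head?_cons, Option.mem_def, Option.some.injEq] at hb
      subst hb
      rcases L₂ with _ | ⟨⟨u₂, g₂⟩, L₃⟩
      · rw [hnil rfl] at ha; simp at ha
      · rw [hlast (by simp)] at ha
        simp only [Option.mem_def, Option.some.injEq] at ha
        subst ha
        simp only [List.head_cons]
        intro hg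
        by_contra hne'
        have hu : u₂ = -u := units_neg_of_ne (fun h => hne' (by rw [h]))
        have h1 : -u₂ = u := by rw [hu, neg_neg]
        rw [h1, inv_mem_iff] at hg
        have h2 := (List.isChain_cons_cons.1 ch).1 hg
        simp only [] at h2
        exact hne' (by rw [show u = u₂ from h2])
    refine ⟨⟨W₂.head, W₂.toList ++ [(-u, g₀⁻¹)], chW'⟩, ?_, ?_, by simp, ?_⟩
    · show (ReducedWord.mk _ _ _).prod φ = _
      rw [prod_mk]
      have hW₂ : of W₂.head * (W₂.toList.map
          (fun x => ((t : HNNExtension G A B φ) ^ (x.1 : ℤ) * of x.2))).prod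
          = ((ReducedWord.mk g L₂ ch₂).prod φ)⁻¹ := by
        rw [← hprod]; rfl
      rw [List.map_append, List.prod_append, ← mul_assoc, hW₂, prod_mk, prod_mk]
      simp [mul_assoc, zpow_neg, mul_inv_rev]
    · show (W₂.toList ++ [(-u, g₀⁻¹)]).map Prod.fst = _
      rw [List.map_append, hpat]
      simp
    · intro _
      show (W₂.toList ++ [(-u, g₀⁻¹)]).getLast? = _
      rw [List.getLast?_concat]
      simp



private lemma length_eq (W V : ReducedWord G A B) (h : W.prod φ = V.prod φ) :
    W.toList.length = V.toList.length := by
  have := (ReducedWord.map_fst_eq_and_of_prod_eq φ h).1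
  simpa using congrArg List.length this

/-- If `t^{-v} x t^{v} = of c' * x` then the candidate extended word cannot be reduced. -/
private lemma clash (v : ℤˣ) (c' : G) (W : ReducedWord G A B)
    (hd : ℤˣ × G) (tl : List (ℤˣ × G)) (l : List (ℤˣ × G)) (p : ℤˣ × G)
    (hL : W.toList = hd :: tl) (hL2 : W.toList = l ++ [p])
    (heq : (t : HNNExtension G A B φ) ^ (-(v : ℤ)) * W.prod φ * t ^ (v : ℤ)
      = of c' * W.prod φ) :
    (W.head ∈ toSubgroup A B (-v) ∧ hd.1 = v) ∨ (p.2 ∈ toSubgroup A B (-v) ∧ p.1 = -v) := by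
  by_contra hcon
  push_neg at hcon
  obtain ⟨h1, h2⟩ := hcon
  have chV : ((-v, W.head) :: (W.toList ++ [(v, (1 : G))])).IsChain
      (fun a b => a.2 ∈ toSubgroup A B a.1 → a.1 = b.1) := by
    refine List.isChain_cons.2 ⟨?_, ?_⟩
    · intro b hb
      rw [hL] at hb
      simp only [List.cons_append, List.head?_cons, Option.mem_def, Option.some.injEq] at hb
      subst hb
      intro hmem
      have : hd.1 ≠ v := h1 (by simpa using hmem)
      rw [units_neg_of_ne this]
    · rw [List.isChain_append]
      refine ⟨W.chain, List.isChain_singleton _, ?_⟩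
      intro a ha b hb
      simp only [List.head?_cons, Option.mem_def, Option.some.injEq] at hb
      subst hb
      rw [hL2, List.getLast?_concat] at ha
      simp only [Option.mem_def, Option.some.injEq] at ha
      subst ha
      intro hmem
      by_contra hne
      have hp : p.1 = -v := units_neg_of_ne hne
      rw [hp] at hmem
      exact h2 hmem hp
  let V : ReducedWord G A B := ⟨1, _, chV⟩
  have hVprod : V.prod φ = of c' * W.prod φ := by
    show (ReducedWord.mk _ _ _).prod φ = _
    rw [prod_mk, ← heq]
    have hWp : W.prod φ = of W.head * (W.toList.map
        (fun x => ((t : HNNExtension G A B φ) ^ (x.1 : ℤ) * of x.2))).prod := rfl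
    rw [hWp]
    simp [List.prod_append, mul_assoc]
  have hWc : (ReducedWord.mk (c' * W.head) W.toList W.chain).prod φ = of c' * W.prod φ := by
    rw [prod_mk, map_mul, mul_assoc]
    rfl
  have hlen := length_eq φ V (ReducedWord.mk (c' * W.head) W.toList W.chain)
    (by rw [hVprod, hWc])
  simp only [V, List.length_cons, List.length_append, List.length_singleton] at hlen
  omega



private lemma t_zpow_mul_of (hA : A = ⊤) (hB : B = ⊤) (m : ℤ) (g : G) :
    ∃ g' : G, (t : HNNExtension G A B φ) ^ m * of g = of g' * t ^ m := by
  induction m using Int.induction_on with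
  | zero => exact ⟨g, by simp⟩
  | succ n ih =>
    obtain ⟨g', hg'⟩ := ih
    refine ⟨(φ ⟨g', by rw [hA]; trivial⟩ : B), ?_⟩
    have ht := t_mul_of (φ := φ) ⟨g', by rw [hA]; trivial⟩
    have e1 : (t : HNNExtension G A B φ) ^ ((n : ℤ) + 1) = t * t ^ (n : ℤ) := by
      rw [add_comm, zpow_add, zpow_one]
    rw [e1, mul_assoc, hg', ← mul_assoc, ht, mul_assoc]
  | pred n ih =>
    obtain ⟨g', hg'⟩ := ih
    refine ⟨(φ.symm ⟨g', by rw [hB]; trivial⟩ : A), ?_⟩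
    have ht := inv_t_mul_of (φ := φ) ⟨g', by rw [hB]; trivial⟩
    have e1 : (t : HNNExtension G A B φ) ^ (-(n : ℤ) - 1) = t⁻¹ * t ^ (-(n : ℤ)) := by
      rw [sub_eq_neg_add, zpow_add, zpow_neg_one]
    rw [e1, mul_assoc, hg', ← mul_assoc, ht, mul_assoc]

private lemma exists_decomp (hA : A = ⊤) (hB : B = ⊤) (x : HNNExtension G A B φ) :
    ∃ (g : G) (m : ℤ), x = of g * t ^ m := by
  induction x using induction_on with
  | of g => exact ⟨g, 0, by simp⟩
  | t => exact ⟨1, 1, by simp⟩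
  | mul x y hx hy =>
    obtain ⟨g₁, m₁, rfl⟩ := hx
    obtain ⟨g₂, m₂, rfl⟩ := hy
    obtain ⟨g', hg'⟩ := t_zpow_mul_of φ hA hB m₁ g₂
    refine ⟨g₁ * g', m₁ + m₂, ?_⟩
    rw [show of g₁ * (t : HNNExtension G A B φ) ^ m₁ * (of g₂ * t ^ m₂)
      = of g₁ * ((t ^ m₁ * of g₂) * t ^ m₂) by group, hg', map_mul, zpow_add]
    group
  | inv x hx =>
    obtain ⟨g, m, rfl⟩ := hx
    obtain ⟨g', hg'⟩ := t_zpow_mul_of φ hA hB (-m) g⁻¹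
    refine ⟨g', -m, ?_⟩
    rw [show (of g * (t : HNNExtension G A B φ) ^ m)⁻¹ = t ^ (-m) * (of g)⁻¹ by
      rw [mul_inv_rev, zpow_neg], ← map_inv, hg']

private lemma conj_pow (c g₀ : G)
    (K1 : (t : HNNExtension G A B φ)⁻¹ * of g₀ * t = of (c * g₀))
    (K2 : (t : HNNExtension G A B φ)⁻¹ * of c * t = of c) :
    ∀ k : ℕ, ((t : HNNExtension G A B φ)⁻¹) ^ k * of g₀ * t ^ k = of (c ^ k * g₀) := by
  have K2k : ∀ k : ℕ, (t : HNNExtension G A B φ)⁻¹ * of (c ^ k) * t = of (c ^ k) := by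
    intro k
    induction k with
    | zero => simp
    | succ n ih =>
      have h : (t : HNNExtension G A B φ)⁻¹ * (of (c ^ n) * of c) * t
          = (t⁻¹ * of (c ^ n) * t) * (t⁻¹ * of c * t) := by group
      rw [pow_succ, map_mul, h, ih, K2]
  have hck : ∀ n : ℕ, ((t : HNNExtension G A B φ)⁻¹) ^ n * of c * t ^ n = of c := by
    intro n
    induction n with
    | zero => simp
    | succ r ihr =>
      rw [pow_succ (t : HNNExtension G A B φ)⁻¹, pow_succ (t : HNNExtension G A B φ),
        show ((t : HNNExtension G A B φ)⁻¹) ^ r * t⁻¹ * of c * (t ^ r * t)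
          = (t⁻¹) ^ r * ((t⁻¹ * of c * t)) * t ^ r by group, K2, ihr]
  intro k
  induction k with
  | zero => simp
  | succ n ih =>
    rw [pow_succ (t : HNNExtension G A B φ)⁻¹, pow_succ (t : HNNExtension G A B φ),
      show ((t : HNNExtension G A B φ)⁻¹) ^ n * t⁻¹ * of g₀ * (t ^ n * t)
        = ((t⁻¹) ^ n * ((t⁻¹ * of g₀ * t)) * t ^ n) by group, K1, map_mul,
      show ((t : HNNExtension G A B φ)⁻¹) ^ n * (of c * of g₀) * t ^ n
        = ((t⁻¹) ^ n * of c * t ^ n) * ((t⁻¹) ^ n * of g₀ * t ^ n) by group]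
    rw [hck n, ih, ← map_mul]
    congr 1
    rw [pow_succ]
    group


end HNNTwistAux

open HNNTwistAux in



/-- Lemma 6.5 ("non-inner from HNN") of the paper: if the twist `τ` of the HNN
extension `HNNExtension G A B φ` determined by an element `c ∈ B` centralizing `B`
(where elements of `B` centralizing `B` commute with the stable letter) is an inner
automorphism, then `c` has finite order and `B = G`. -/
theorem hnn_twist_inner_of_centralising {G : Type*} [Group G] {A B : Subgroup G}
    (φ : A ≃* B)
    (hcomm : ∀ z ∈ B, (∀ b ∈ B, z * b = b * z) →
      (HNNExtension.of z : HNNExtension G A B φ) * HNNExtension.t =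
        HNNExtension.t * HNNExtension.of z)
    (c : G) (hcB : c ∈ B) (hc1 : c ≠ 1) (hcc : ∀ b ∈ B, c * b = b * c)
    (τ : MulAut (HNNExtension G A B φ))
    (hτof : ∀ g : G, τ (HNNExtension.of g) = HNNExtension.of g)
    (hτt : τ (HNNExtension.t : HNNExtension G A B φ) =
      HNNExtension.of c * HNNExtension.t)
    (hinner : ∃ w : HNNExtension G A B φ, ∀ x, τ x = w * x * w⁻¹) :
    IsOfFinOrder c ∧ B = ⊤ := by

  classical
  obtain ⟨w, hw⟩ := hinner
  have HZ : ∀ g : G, of g * w = w * of g := by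
    intro g
    have h1 := hτof g
    rw [hw] at h1
    have h2 := congrArg (fun x => x * w) h1
    simpa [mul_assoc] using h2.symm
  have Hct : (of c : HNNExtension G A B φ) * t = t * of c := hcomm c hcB hcc
  have E1 : (t : HNNExtension G A B φ)⁻¹ * w * t = of c * w := by
    have h1 := hτt
    rw [hw] at h1
    have h2 : w * t = t * (of c * w) := by
      rw [← mul_assoc, ← Hct, ← h1]; group
    rw [mul_assoc, h2]; group
  have E2 : (t : HNNExtension G A B φ) * w * t⁻¹ = of c⁻¹ * w := by
    have h3 : of c * (t * w * t⁻¹) = w := by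
      calc of c * ((t : HNNExtension G A B φ) * w * t⁻¹)
          = (of c * t) * w * t⁻¹ := by group
        _ = (t * of c) * w * t⁻¹ := by rw [Hct]
        _ = t * (of c * w) * t⁻¹ := by group
        _ = t * (t⁻¹ * w * t) * t⁻¹ := by rw [E1]
        _ = w := by group
    rw [map_inv]
    exact eq_inv_mul_iff_mul_eq.2 h3
  obtain ⟨d⟩ := HNNExtension.NormalWord.TransversalPair.nonempty G A B
  set W : ReducedWord G A B := (NormalWord.equiv φ d w).toReducedWord with hWdef
  have hW : W.prod φ = w := Equiv.symm_apply_apply (NormalWord.equiv φ d) w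
  by_cases hLnil : W.toList = []
  · exfalso
    have hwof : w = of W.head := by
      have h0 : W.prod φ = of W.head * ((W.toList.map
        (fun x => ((t : HNNExtension G A B φ) ^ (x.1 : ℤ) * of x.2))).prod) := rfl
      rw [hLnil] at h0
      simp only [List.map_nil, List.prod_nil, mul_one] at h0
      rw [← hW, h0]
    have hcent : ∀ b : G, W.head * b = b * W.head := by
      intro b
      have h1 := HZ b
      rw [hwof, ← map_mul, ← map_mul] at h1
      exact (HNNExtension.of_injective (φ := φ) h1).symm
    have hmemB : W.head ∈ B := by
      by_contra hnB
      have chV : (((((-1 : ℤˣ), W.head)) : ℤˣ × G) :: [((1 : ℤˣ), (1 : G))]).IsChain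
          (fun a b => a.2 ∈ toSubgroup A B a.1 → a.1 = b.1) := by
        refine List.isChain_cons_cons.2 ⟨?_, List.isChain_singleton _⟩
        intro hmem
        exact absurd (by simpa using hmem) hnB
      have hE := E1
      rw [hwof] at hE
      have hVprod : (ReducedWord.mk (1 : G) _ chV).prod φ = of (c * W.head) := by
        rw [prod_mk]
        simp only [List.map_cons, List.map_nil, List.prod_cons, List.prod_nil, map_one,
          mul_one, one_mul, Units.val_neg, Units.val_one, zpow_neg, zpow_one]
        rw [map_mul, ← hE]
      have hnil := HNNExtension.ReducedWord.toList_eq_nil_of_mem_of_range φ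
        (ReducedWord.mk (1 : G) _ chV) ⟨c * W.head, hVprod.symm⟩
      simp at hnil
    have hcm := hcomm W.head hmemB (fun b _ => hcent b)
    have hE := E1
    rw [hwof] at hE
    have h5 : (of W.head : HNNExtension G A B φ) = of (c * W.head) := by
      calc (of W.head : HNNExtension G A B φ) = t⁻¹ * (t * of W.head) := by group
        _ = t⁻¹ * (of W.head * t) := by rw [hcm]
        _ = t⁻¹ * of W.head * t := by group
        _ = of c * of W.head := hE
        _ = of (c * W.head) := by rw [map_mul]
    exact hc1 (right_eq_mul.1 (HNNExtension.of_injective (φ := φ) h5))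
  · obtain ⟨hd, tl, hL⟩ := List.exists_cons_of_ne_nil hLnil
    rcases List.eq_nil_or_concat W.toList with hnil2 | ⟨l, p, hL2⟩
    · exact absurd hnil2 hLnil
    rw [List.concat_eq_append] at hL2
    have P := clash φ 1 c W hd tl l p hL hL2 (by rw [hW]; simpa using E1)
    have Q := clash φ (-1) c⁻¹ W hd tl l p hL hL2 (by rw [hW]; simpa using E2)
    have H1 : toSubgroup A B (-(W.toList.head hLnil).1) = ⊤ :=
      head_top φ w HZ W hW hLnil
    have hhd : W.toList.head hLnil = hd := by
      have h : some (W.toList.head hLnil) = some hd := by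
        rw [← List.head?_eq_head hLnil, hL]
        simp
      exact Option.some.inj h
    obtain ⟨W', hWp, hWpat, -, -⟩ := exists_inv_word φ W.toList W.chain W.head
    have hWp' : W'.prod φ = w⁻¹ := by rw [hWp, ← hW]
    have hW'ne : W'.toList ≠ [] := by
      intro h
      rw [h, hL2] at hWpat
      simp at hWpat
    have H2 : toSubgroup A B (-(W'.toList.head hW'ne).1) = ⊤ :=
      head_top φ w⁻¹ (fun g => (Commute.inv_right (HZ g) : _)) W' hWp' hW'ne
    have hW'hd : (W'.toList.head hW'ne).1 = -p.1 := by
      have h1 : (W'.toList.map Prod.fst).head? = some (W'.toList.head hW'ne).1 := by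
        rw [List.head?_map, List.head?_eq_head hW'ne, Option.map_some]
      rw [hWpat, hL2] at h1
      simp at h1
      exact h1.symm
    rw [hW'hd, neg_neg] at H2
    rw [hhd] at H1
    have hB : B = ⊤ := by
      rcases P with ⟨-, h⟩ | ⟨-, h⟩
      · rw [h] at H1
        simpa using H1
      · rw [h] at H2
        simpa using H2
    have hA : A = ⊤ := by
      rcases Q with ⟨-, h⟩ | ⟨-, h⟩
      · rw [h] at H1
        simpa using H1
      · rw [h] at H2
        simpa using H2
    refine ⟨?_, hB⟩
    obtain ⟨g₀, m, hwdec⟩ := exists_decomp φ hA hB w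
    have K1 : (t : HNNExtension G A B φ)⁻¹ * of g₀ * t = of (c * g₀) := by
      have h1 := E1
      rw [hwdec] at h1
      have h2 : ((t : HNNExtension G A B φ)⁻¹ * of g₀ * t) * t ^ m
          = of (c * g₀) * t ^ m := by
        rw [map_mul]
        calc (t : HNNExtension G A B φ)⁻¹ * of g₀ * t * t ^ m
            = t⁻¹ * (of g₀ * t ^ m) * t := by group
          _ = of c * (of g₀ * t ^ m) := h1
          _ = of c * of g₀ * t ^ m := by group
      exact mul_right_cancel h2
    have K2 : (t : HNNExtension G A B φ)⁻¹ * of c * t = of c := by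
      calc (t : HNNExtension G A B φ)⁻¹ * of c * t = t⁻¹ * (of c * t) := by group
        _ = t⁻¹ * (t * of c) := by rw [Hct]
        _ = of c := by group
    by_cases hm : m = 0
    · exfalso
      subst hm
      rw [zpow_zero, mul_one] at hwdec
      have hcent : ∀ b : G, g₀ * b = b * g₀ := by
        intro b
        have h1 := HZ b
        rw [hwdec, ← map_mul, ← map_mul] at h1
        exact (HNNExtension.of_injective (φ := φ) h1).symm
      have hcm := hcomm g₀ (by rw [hB]; trivial) (fun b _ => hcent b)
      have h5 : (of g₀ : HNNExtension G A B φ) = of (c * g₀) := by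
        calc (of g₀ : HNNExtension G A B φ) = t⁻¹ * (t * of g₀) := by group
          _ = t⁻¹ * (of g₀ * t) := by rw [hcm]
          _ = t⁻¹ * of g₀ * t := by group
          _ = of (c * g₀) := K1
      exact hc1 (right_eq_mul.1 (HNNExtension.of_injective (φ := φ) h5))
    · have hcomm_t : (t : HNNExtension G A B φ) ^ m * of g₀ = of g₀ * t ^ m := by
        have h1 := HZ g₀
        rw [hwdec] at h1
        have h2 : of g₀ * ((of g₀ : HNNExtension G A B φ) * t ^ m)
            = of g₀ * (t ^ m * of g₀) := by
          rw [h1]; group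
        exact (mul_left_cancel h2).symm
      set k : ℕ := m.natAbs with hk
      have hkne : k ≠ 0 := Int.natAbs_ne_zero.2 hm
      have hcmm : Commute ((t : HNNExtension G A B φ) ^ m) (of g₀) := hcomm_t
      have hcmk : Commute ((t : HNNExtension G A B φ) ^ k) (of g₀) := by
        rcases Int.natAbs_eq m with he | he
        · have h3 : (t : HNNExtension G A B φ) ^ k = t ^ m := by
            rw [← zpow_natCast, hk, ← he]
          rw [h3]
          exact hcmm
        · have hm' : (k : ℤ) = -m := by rw [hk]; omega
          have h3 : (t : HNNExtension G A B φ) ^ k = (t ^ m)⁻¹ := by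
            rw [← zpow_natCast, hm', zpow_neg]
          rw [h3]
          exact hcmm.inv_left
      have hcomm_k : ((t : HNNExtension G A B φ)⁻¹) ^ k * of g₀ * t ^ k = of g₀ := by
        rw [inv_pow]
        calc ((t : HNNExtension G A B φ) ^ k)⁻¹ * of g₀ * t ^ k
            = (t ^ k)⁻¹ * (of g₀ * t ^ k) := by group
          _ = (t ^ k)⁻¹ * (t ^ k * of g₀) := by rw [hcmk.eq]
          _ = of g₀ := by group
      have hcj := conj_pow φ c g₀ K1 K2 k
      rw [hcomm_k] at hcj
      have h7 : c ^ k * g₀ = g₀ := HNNExtension.of_injective (φ := φ) hcj.symm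
      have h8 : c ^ k = 1 := mul_eq_right.1 h7
      exact isOfFinOrder_iff_pow_eq_one.2 ⟨k, Nat.pos_of_ne_zero hkne, h8⟩
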